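/- Let A be a commutative ring containing ℚ and let H be an n×n matrix over the formal power series ring A[[x]] whose constant term H₀ := H(0) is a nilpotent matrix over A. Then there exists a unique n×n matrix U over A[[x]] with constant term equal to the identity matrix such that x·U′ + H·U = U·H₀, where U′ denotes the entrywise formal derivative of U. Moreover U is invertible in the ring of n×n matrices over A[[x]]. -/

import Mathlib

open PowerSeries Finset

section Aux

variable {A : Type*} [CommRing A] [Algebra ℚ A] {n : ℕ}

/-- The operator `X ↦ k • X + (H₀ * X - X * H₀)` as an `A`-linear endomorphism. -/
noncomputable def Eop (H₀ : Matrix (Fin n) (Fin n) A) (k : ℕ) :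
    Module.End A (Matrix (Fin n) (Fin n) A) :=
  algebraMap A _ ((k : ℕ) : A) + (LinearMap.mulLeft A H₀ - LinearMap.mulRight A H₀)

lemma Eop_apply (H₀ X : Matrix (Fin n) (Fin n) A) (k : ℕ) :
    Eop H₀ k X = ((k : ℕ) : A) • X + (H₀ * X - X * H₀) := by
  simp only [Eop, LinearMap.add_apply, Module.algebraMap_end_apply, LinearMap.sub_apply,
    LinearMap.mulLeft_apply, LinearMap.mulRight_apply]

lemma isUnit_Eop {H₀ : Matrix (Fin n) (Fin n) A} (hH₀ : IsNilpotent H₀) (k : ℕ) (hk : k ≠ 0) :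
    IsUnit (Eop H₀ k) := by
  have hnil : IsNilpotent (LinearMap.mulLeft A H₀ - LinearMap.mulRight A H₀) := by
    have hl : IsNilpotent (LinearMap.mulLeft A H₀) :=
      (LinearMap.isNilpotent_mulLeft_iff A H₀).mpr hH₀
    have hr : IsNilpotent (LinearMap.mulRight A H₀) :=
      (LinearMap.isNilpotent_mulRight_iff A H₀).mpr hH₀
    exact (LinearMap.commute_mulLeft_right H₀ H₀).isNilpotent_sub hl hr
  have hu : IsUnit (algebraMap A (Module.End A (Matrix (Fin n) (Fin n) A)) ((k : ℕ) : A)) := by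
    apply IsUnit.map
    have h1 : ((k : ℕ) : A) = algebraMap ℚ A ((k : ℕ) : ℚ) := by
      rw [map_natCast]
    rw [h1]
    exact IsUnit.map _ (isUnit_iff_ne_zero.mpr (by exact_mod_cast hk))
  exact hnil.isUnit_add_left_of_commute hu (Algebra.commutes _ _).symm

/-- The recursively-defined coefficients of the solution `U`. -/
noncomputable def Uc (H : Matrix (Fin n) (Fin n) (PowerSeries A)) : ℕ → Matrix (Fin n) (Fin n) A
  | 0 => 1
  | (k+1) =>
    Ring.inverse (Eop (H.map (constantCoeff (R := A))) (k+1))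
      (- ∑ i ∈ (range (k+1)).attach,
          H.map (PowerSeries.coeff (R := A) (k+1-(i : ℕ))) * Uc H (i : ℕ))
  decreasing_by exact mem_range.mp i.2

lemma Uc_succ {H : Matrix (Fin n) (Fin n) (PowerSeries A)}
    (hH₀ : IsNilpotent (H.map (constantCoeff (R := A)))) (k : ℕ) :
    Eop (H.map (constantCoeff (R := A))) (k+1) (Uc H (k+1))
      = - ∑ i ∈ range (k+1), H.map (PowerSeries.coeff (R := A) (k+1-i)) * Uc H i := by
  conv_lhs => rw [Uc]
  rw [← Module.End.mul_apply, Ring.mul_inverse_cancel _ (isUnit_Eop hH₀ (k+1) k.succ_ne_zero),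
    Module.End.one_apply,
    ← Finset.sum_attach (range (k+1)) (fun i => H.map (PowerSeries.coeff (R := A) (k+1-i)) * Uc H i)]

lemma antidiag_peel (h c : ℕ → Matrix (Fin n) (Fin n) A) (k : ℕ) :
    ∑ p ∈ Finset.HasAntidiagonal.antidiagonal (k+1), h p.1 * c p.2
      = h 0 * c (k+1) + ∑ j ∈ range (k+1), h (k+1-j) * c j := by
  rw [Finset.Nat.sum_antidiagonal_eq_sum_range_succ (fun a b => h a * c b),
    Finset.sum_range_succ', add_comm (h 0 * c (k+1))]
  congr 1
  conv_rhs => rw [← Finset.sum_range_reflect (fun j => h (k+1-j) * c j) (k+1)]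
  apply Finset.sum_congr rfl
  intro i hi
  have hik := Finset.mem_range.mp hi
  have e1 : k + 1 - 1 - i = k - i := by omega
  have e2 : k + 1 - (k - i) = i + 1 := by omega
  have e3 : k + 1 - (i + 1) = k - i := by omega
  simp only [e1, e2, e3]

lemma map_coeff_zero (H : Matrix (Fin n) (Fin n) (PowerSeries A)) :
    H.map (PowerSeries.coeff (R := A) 0) = H.map (constantCoeff (R := A)) := by
  ext i j
  simp [Matrix.map_apply, coeff_zero_eq_constantCoeff]

/-- The recurrence satisfied by the coefficients `Uc`. -/
lemma Uc_rec {H : Matrix (Fin n) (Fin n) (PowerSeries A)}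
    (hH₀ : IsNilpotent (H.map (constantCoeff (R := A)))) (k : ℕ) :
    ((k : ℕ) : A) • Uc H k
      + ∑ p ∈ Finset.HasAntidiagonal.antidiagonal k, H.map (PowerSeries.coeff (R := A) p.1) * Uc H p.2
      = Uc H k * H.map (constantCoeff (R := A)) := by
  cases k with
  | zero =>
    simp [Uc, map_coeff_zero]
  | succ k =>
    have hU := Uc_succ hH₀ k
    rw [Eop_apply] at hU
    rw [antidiag_peel (fun m => H.map (PowerSeries.coeff (R := A) m)) (fun m => Uc H m) k,
      map_coeff_zero]
    set a := ((k + 1 : ℕ) : A) • Uc H (k+1)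
    set b := H.map (constantCoeff (R := A)) * Uc H (k+1)
    set c := Uc H (k+1) * H.map (constantCoeff (R := A))
    set S := ∑ j ∈ range (k+1), H.map (PowerSeries.coeff (R := A) (k+1-j)) * Uc H j
    calc a + (b + S) = (a + (b - c)) + S + c := by abel
      _ = -S + S + c := by rw [hU]
      _ = c := by abel

lemma coeff_X_mul_derivative (f : PowerSeries A) (k : ℕ) :
    PowerSeries.coeff (R := A) k (PowerSeries.X * PowerSeries.derivative A f)
      = ((k : ℕ) : A) * PowerSeries.coeff (R := A) k f := by
  cases k with
  | zero => simp
  | succ k =>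
    rw [coeff_succ_X_mul, coeff_derivative]
    push_cast
    ring

lemma coeff_entry_lhs (H V : Matrix (Fin n) (Fin n) (PowerSeries A)) (i j : Fin n) (k : ℕ) :
    PowerSeries.coeff (R := A) k
        (((V.map (fun f => PowerSeries.X * PowerSeries.derivative A f) + H * V :
            Matrix (Fin n) (Fin n) (PowerSeries A))) i j)
      = (((k : ℕ) : A) • V.map (PowerSeries.coeff (R := A) k)
          + ∑ p ∈ Finset.HasAntidiagonal.antidiagonal k,
              H.map (PowerSeries.coeff (R := A) p.1) * V.map (PowerSeries.coeff (R := A) p.2)) i j := by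
  rw [Matrix.add_apply, map_add, Matrix.add_apply]
  congr 1
  · rw [Matrix.map_apply, coeff_X_mul_derivative, Matrix.smul_apply, Matrix.map_apply,
      smul_eq_mul]
  · rw [Matrix.mul_apply, map_sum]
    simp only [PowerSeries.coeff_mul]
    rw [Finset.sum_comm, Matrix.sum_apply]
    apply Finset.sum_congr rfl
    intro p _
    rw [Matrix.mul_apply]
    simp [Matrix.map_apply]

lemma coeff_entry_rhs (H V : Matrix (Fin n) (Fin n) (PowerSeries A)) (i j : Fin n) (k : ℕ) :
    PowerSeries.coeff (R := A) k ((V * ((H.map (constantCoeff (R := A))).map (PowerSeries.C (R := A))) :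
        Matrix (Fin n) (Fin n) (PowerSeries A)) i j)
      = (V.map (PowerSeries.coeff (R := A) k) * H.map (constantCoeff (R := A))) i j := by
  rw [Matrix.mul_apply, map_sum, Matrix.mul_apply]
  apply Finset.sum_congr rfl
  intro l _
  rw [Matrix.map_apply, Matrix.map_apply, coeff_mul_C, Matrix.map_apply]

lemma equation_iff (H V : Matrix (Fin n) (Fin n) (PowerSeries A)) :
    (V.map (fun f => PowerSeries.X * PowerSeries.derivative A f) + H * V
        = V * ((H.map (constantCoeff (R := A))).map (PowerSeries.C (R := A))))
      ↔ ∀ k, ((k : ℕ) : A) • V.map (PowerSeries.coeff (R := A) k)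
          + ∑ p ∈ Finset.HasAntidiagonal.antidiagonal k,
              H.map (PowerSeries.coeff (R := A) p.1) * V.map (PowerSeries.coeff (R := A) p.2)
          = V.map (PowerSeries.coeff (R := A) k) * H.map (constantCoeff (R := A)) := by
  constructor
  · intro hEq k
    ext i j
    rw [← coeff_entry_lhs, ← coeff_entry_rhs, hEq]
  · intro hc
    ext i j k
    rw [coeff_entry_lhs, coeff_entry_rhs, hc k]

lemma seq_unique {H : Matrix (Fin n) (Fin n) (PowerSeries A)}
    (hH₀ : IsNilpotent (H.map (constantCoeff (R := A)))) (c : ℕ → Matrix (Fin n) (Fin n) A)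
    (h0 : c 0 = 1)
    (hrec : ∀ k, ((k : ℕ) : A) • c k
      + ∑ p ∈ Finset.HasAntidiagonal.antidiagonal k, H.map (PowerSeries.coeff (R := A) p.1) * c p.2
      = c k * H.map (constantCoeff (R := A))) :
    ∀ k, c k = Uc H k := by
  intro k
  induction k using Nat.strong_induction_on with
  | _ k IH =>
    match k with
    | 0 => rw [h0, Uc]
    | (k+1) =>
      have h1 := hrec (k+1)
      rw [antidiag_peel (fun m => H.map (PowerSeries.coeff (R := A) m)) c k, map_coeff_zero] at h1
      have h2 : Eop (H.map (constantCoeff (R := A))) (k+1) (c (k+1))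
          = - ∑ j ∈ range (k+1), H.map (PowerSeries.coeff (R := A) (k+1-j)) * c j := by
        rw [Eop_apply]
        set a := ((k + 1 : ℕ) : A) • c (k+1)
        set b := H.map (constantCoeff (R := A)) * c (k+1)
        set d := c (k+1) * H.map (constantCoeff (R := A))
        set S := ∑ j ∈ range (k+1), H.map (PowerSeries.coeff (R := A) (k+1-j)) * c j
        calc a + (b - d) = (a + (b + S)) - S - d := by abel
          _ = d - S - d := by rw [h1]
          _ = -S := by abel
      have hsum : (∑ j ∈ range (k+1), H.map (PowerSeries.coeff (R := A) (k+1-j)) * c j)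
          = ∑ j ∈ range (k+1), H.map (PowerSeries.coeff (R := A) (k+1-j)) * Uc H j := by
        apply Finset.sum_congr rfl
        intro j hj
        rw [IH j (Finset.mem_range.mp hj)]
      rw [hsum, ← Uc_succ hH₀ k] at h2
      have hu := isUnit_Eop hH₀ (k+1) k.succ_ne_zero
      have h3 := congrArg (fun X => Ring.inverse (Eop (H.map (constantCoeff (R := A))) (k+1)) X) h2
      simpa only [← Module.End.mul_apply, Ring.inverse_mul_cancel _ hu, Module.End.one_apply]
        using h3

end Aux

/-- Let `A` be a commutative ring containing `ℚ` and `H` an `n × n` matrix over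
`A⟦x⟧` whose constant term `H₀ := H(0)` is nilpotent over `A`. Then there is a unique `n × n`
matrix `U` over `A⟦x⟧` with constant term the identity such that `x • U' + H * U = U * H₀`,
and moreover any such `U` is invertible. -/
theorem stmt1 (A : Type*) [CommRing A] [Algebra ℚ A] (n : ℕ)
    (H : Matrix (Fin n) (Fin n) (PowerSeries A))
    (hH : IsNilpotent (H.map (PowerSeries.constantCoeff (R := A)))) :
    (∃! U : Matrix (Fin n) (Fin n) (PowerSeries A),
      U.map (PowerSeries.constantCoeff (R := A)) = 1 ∧
      U.map (fun f => PowerSeries.X * PowerSeries.derivative A f) + H * U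
        = U * ((H.map (PowerSeries.constantCoeff (R := A))).map (PowerSeries.C (R := A)))) ∧
    (∀ U : Matrix (Fin n) (Fin n) (PowerSeries A),
      (U.map (PowerSeries.constantCoeff (R := A)) = 1 ∧
       U.map (fun f => PowerSeries.X * PowerSeries.derivative A f) + H * U
        = U * ((H.map (PowerSeries.constantCoeff (R := A))).map (PowerSeries.C (R := A)))) →
      IsUnit U) := by
  set U : Matrix (Fin n) (Fin n) (PowerSeries A) :=
    Matrix.of fun i j => PowerSeries.mk fun k => Uc H k i j with hUdef
  have hUmap : ∀ k, U.map (PowerSeries.coeff (R := A) k) = Uc H k := by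
    intro k
    ext i j
    simp [hUdef, Matrix.map_apply, PowerSeries.coeff_mk]
  have hU0 : U.map (PowerSeries.constantCoeff (R := A)) = 1 := by
    have := hUmap 0
    rw [map_coeff_zero] at this
    rw [this, Uc]
  have hUeq : U.map (fun f => PowerSeries.X * PowerSeries.derivative A f) + H * U
      = U * ((H.map (PowerSeries.constantCoeff (R := A))).map (PowerSeries.C (R := A))) := by
    rw [equation_iff]
    intro k
    simp only [hUmap]
    exact Uc_rec hH k
  have huniq : ∀ V : Matrix (Fin n) (Fin n) (PowerSeries A),
      (V.map (PowerSeries.constantCoeff (R := A)) = 1 ∧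
       V.map (fun f => PowerSeries.X * PowerSeries.derivative A f) + H * V
        = V * ((H.map (PowerSeries.constantCoeff (R := A))).map (PowerSeries.C (R := A)))) → V = U := by
    intro V ⟨hV0, hVeq⟩
    have hc0 : V.map (PowerSeries.coeff (R := A) 0) = 1 := by
      rw [map_coeff_zero V, hV0]
    have hrec := (equation_iff H V).mp hVeq
    have hval := seq_unique hH (fun k => V.map (PowerSeries.coeff (R := A) k)) hc0 hrec
    ext i j k
    have h1 : (V.map (PowerSeries.coeff (R := A) k)) i j = (Uc H k) i j :=
      congrFun (congrFun (hval k) i) j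
    have h2 : (U.map (PowerSeries.coeff (R := A) k)) i j = (Uc H k) i j :=
      congrFun (congrFun (hUmap k) i) j
    simpa [Matrix.map_apply] using h1.trans h2.symm
  constructor
  · exact ⟨U, ⟨hU0, hUeq⟩, huniq⟩
  · intro V hV
    rw [Matrix.isUnit_iff_isUnit_det]
    rw [PowerSeries.isUnit_iff_constantCoeff]
    have : (PowerSeries.constantCoeff (R := A)) V.det = (V.map (PowerSeries.constantCoeff (R := A))).det :=
      RingHom.map_det _ _
    rw [this, hV.1, Matrix.det_one]
    exact isUnit_one
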